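/- For p(Z) = Z³ and z in the hyperplane H = {z₁ + z₂ + z₃ = 0}, the Weierstrass map is homogeneous of degree 1: W_{Z³}(λ·z) = λ·W_{Z³}(z) for all λ ∈ ℂ, λ ≠ 0, and all z ∈ H with pairwise distinct entries. Moreover, W_{Z³}(1, z, −1−z) = s(z)·(1, φ(z), −1−φ(z)) where s(z) = (1 − z − z²)/(2 − z − z²) and φ(z) = z(2+z)(1+z−z²)/((1+2z)(1−z−z²)), for all z for which all expressions are defined and nondegenerate. -/

import Mathlib

open Polynomial Finset

lemma prod_erase0 (f : Fin 3 → ℂ) : ∏ j ∈ univ.erase (0:Fin 3), f j = f 1 * f 2 := by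
  have : (univ.erase (0:Fin 3)) = {1, 2} := by decide
  rw [this]; simp

lemma prod_erase1 (f : Fin 3 → ℂ) : ∏ j ∈ univ.erase (1:Fin 3), f j = f 0 * f 2 := by
  have : (univ.erase (1:Fin 3)) = {0, 2} := by decide
  rw [this]; simp

lemma prod_erase2 (f : Fin 3 → ℂ) : ∏ j ∈ univ.erase (2:Fin 3), f j = f 0 * f 1 := by
  have : (univ.erase (2:Fin 3)) = {0, 1} := by decide
  rw [this]; simp

/-- For `p(Z) = Z³` on the hyperplane `z₁+z₂+z₃ = 0`, the Weierstrass map is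
homogeneous of degree 1, and on the line `(1, z, −1−z)` it acts as
`W(1, z, −1−z) = s(z)·(1, φ(z), −1−φ(z))` with
`s(z) = (1−z−z²)/(2−z−z²)` and `φ(z) = z(2+z)(1+z−z²)/((1+2z)(1−z−z²))`. -/
theorem weierstrass_cubic_homogeneous_and_projectivized
    (W : (Fin 3 → ℂ) → Fin 3 → ℂ)
    (hW : ∀ (w : Fin 3 → ℂ) (k : Fin 3),
      W w k = w k - (w k) ^ 3 / ∏ j ∈ univ.erase k, (w k - w j)) :
    (∀ (z : Fin 3 → ℂ), Function.Injective z → z 0 + z 1 + z 2 = 0 →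
      ∀ (l : ℂ), l ≠ 0 → W (fun k => l * z k) = fun k => l * W z k) ∧
    (∀ z : ℂ, (1 : ℂ) ≠ z → z ≠ -1 - z → (1 : ℂ) ≠ -1 - z →
      1 + 2 * z ≠ 0 → 1 - z - z ^ 2 ≠ 0 → 2 - z - z ^ 2 ≠ 0 →
      W ![1, z, -1 - z] =
        fun k => ((1 - z - z ^ 2) / (2 - z - z ^ 2)) *
          ![1, z * (2 + z) * (1 + z - z ^ 2) / ((1 + 2 * z) * (1 - z - z ^ 2)),
            -1 - z * (2 + z) * (1 + z - z ^ 2) / ((1 + 2 * z) * (1 - z - z ^ 2))] k) := by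
  have W0 : ∀ w : Fin 3 → ℂ, W w 0 = w 0 - (w 0) ^ 3 / ((w 0 - w 1) * (w 0 - w 2)) := by
    intro w; rw [hW, prod_erase0]
  have W1 : ∀ w : Fin 3 → ℂ, W w 1 = w 1 - (w 1) ^ 3 / ((w 1 - w 0) * (w 1 - w 2)) := by
    intro w; rw [hW, prod_erase1]
  have W2 : ∀ w : Fin 3 → ℂ, W w 2 = w 2 - (w 2) ^ 3 / ((w 2 - w 0) * (w 2 - w 1)) := by
    intro w; rw [hW, prod_erase2]
  constructor
  · intro z hinj _ l hl
    have hne : ∀ i j : Fin 3, i ≠ j → z i - z j ≠ 0 := fun i j h => by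
      exact sub_ne_zero.mpr (fun e => h (hinj e))
    funext k
    have key : ∀ a b c : ℂ, (l * a - l * b) * (l * a - l * c) =
        l ^ 2 * ((a - b) * (a - c)) := by intros; ring
    have key2 : ∀ a : ℂ, (l * a) ^ 3 = l ^ 2 * (l * a ^ 3) := by intros; ring
    fin_cases k
    · rw [show (⟨0, by norm_num⟩ : Fin 3) = 0 from rfl, W0, W0]
      rw [key, key2, mul_div_mul_left _ _ (pow_ne_zero 2 hl), mul_sub, mul_div_assoc]; ring
    · rw [show (⟨1, by norm_num⟩ : Fin 3) = 1 from rfl, W1, W1]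
      rw [key, key2, mul_div_mul_left _ _ (pow_ne_zero 2 hl), mul_sub, mul_div_assoc]; ring
    · rw [show (⟨2, by norm_num⟩ : Fin 3) = 2 from rfl, W2, W2]
      rw [key, key2, mul_div_mul_left _ _ (pow_ne_zero 2 hl), mul_sub, mul_div_assoc]; ring
  · intro z h1 h2 h3 h4 h5 h6
    have hz1 : (1:ℂ) - z ≠ 0 := sub_ne_zero.mpr h1
    have hz2 : (2:ℂ) + z ≠ 0 := by
      intro h
      apply h6
      have : (2:ℂ) - z - z ^ 2 = (1 - z) * (2 + z) := by ring
      rw [this, h, mul_zero]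
    funext k
    fin_cases k
    · rw [show (⟨0, by norm_num⟩ : Fin 3) = 0 from rfl, W0]
      simp only [Matrix.cons_val_zero, Matrix.cons_val_one, Matrix.head_cons,
        Matrix.cons_val_two, Matrix.tail_cons]
      rw [show ((1:ℂ) - z) * (1 - (-1 - z)) = (1 - z) * (2 + z) from by ring]
      field_simp; ring
    · rw [show (⟨1, by norm_num⟩ : Fin 3) = 1 from rfl, W1]
      simp only [Matrix.cons_val_zero, Matrix.cons_val_one, Matrix.head_cons,
        Matrix.cons_val_two, Matrix.tail_cons]
      rw [show (z - (1:ℂ)) * (z - (-1 - z)) = (z - 1) * (1 + 2 * z) from by ring]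
      have hz3 : z - (1:ℂ) ≠ 0 := sub_ne_zero.mpr (Ne.symm h1)
      have h4' : (1:ℂ) + z * 2 ≠ 0 := by rwa [mul_comm]
      field_simp; ring
    · rw [show (⟨2, by norm_num⟩ : Fin 3) = 2 from rfl, W2]
      simp only [Matrix.cons_val_zero, Matrix.cons_val_one, Matrix.head_cons,
        Matrix.cons_val_two, Matrix.tail_cons]
      rw [show ((-1:ℂ) - z - 1) * (-1 - z - z) = (2 + z) * (1 + 2 * z) from by ring]
      have h4' : (1:ℂ) + z * 2 ≠ 0 := by rwa [mul_comm]
      field_simp; ring
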